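/- Let n, m, k be integers with n ≥ m ≥ 1 and k ≥ 3. Then gr_k(K_3 : S(n,m)) ≥ max{5·(n/2), n + 2m + 1} + m(k-3) + 1 if n is even, and gr_k(K_3 : S(n,m)) ≥ max{5·((n-1)/2), n + 2m + 1} + m(k-3) + 2 if n is odd. -/

import Mathlib

open Finset

/-- A symmetric edge-coloring of a complete graph, given as a function on ordered
pairs of vertices. -/
def IsSymmColoring {V C : Type*} (c : V → V → C) : Prop := ∀ u v, c u v = c v u

/-- The coloring `c` contains a rainbow triangle: three vertices whose three
connecting edges get three distinct colors. -/
def HasRainbowTriangle {V C : Type*} (c : V → V → C) : Prop :=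
  ∃ u v w : V, u ≠ v ∧ u ≠ w ∧ v ≠ w ∧
    c u v ≠ c u w ∧ c u v ≠ c v w ∧ c u w ≠ c v w

/-- The coloring `c` contains a monochromatic triangle. -/
def HasMonoTriangle {V C : Type*} (c : V → V → C) : Prop :=
  ∃ u v w : V, u ≠ v ∧ u ≠ w ∧ v ≠ w ∧ c u v = c u w ∧ c u v = c v w

/-- The coloring `c` contains a monochromatic copy of the double star `S(n,m)`:
two adjacent centers `u, v`, a set `A` of `n` further leaves at `u` and a set `B`
of `m` further leaves at `v`, all edges in one color. -/
def HasMonoDoubleStar {V C : Type*} (c : V → V → C) (n m : ℕ) : Prop :=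
  ∃ (u v : V) (A B : Finset V) (col : C),
    u ≠ v ∧ A.card = n ∧ B.card = m ∧ Disjoint A B ∧
    u ∉ A ∧ u ∉ B ∧ v ∉ A ∧ v ∉ B ∧
    c u v = col ∧ (∀ a ∈ A, c u a = col) ∧ (∀ b ∈ B, c v b = col)

/-- Every `k`-edge-coloring of the complete graph on `N` vertices contains a
rainbow triangle or a monochromatic `S(n,m)` (so `gr_k(K_3 : S(n,m)) ≤ N`). -/
def grHolds (k n m N : ℕ) : Prop :=
  ∀ c : Fin N → Fin N → Fin k, IsSymmColoring c →
    HasRainbowTriangle c ∨ HasMonoDoubleStar c n m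

/-- There is a `k`-edge-coloring of the complete graph on `N` vertices with no
rainbow triangle and no monochromatic `S(n,m)` (so `gr_k(K_3 : S(n,m)) > N`). -/
def grAvoid (k n m N : ℕ) : Prop :=
  ∃ c : Fin N → Fin N → Fin k, IsSymmColoring c ∧
    ¬ HasRainbowTriangle c ∧ ¬ HasMonoDoubleStar c n m

namespace Stmt12

def MonoDSCol {V C : Type*} (c : V → V → C) (n m : ℕ) (col : C) : Prop :=
  ∃ (u v : V) (A B : Finset V),
    u ≠ v ∧ A.card = n ∧ B.card = m ∧ Disjoint A B ∧
    u ∉ A ∧ u ∉ B ∧ v ∉ A ∧ v ∉ B ∧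
    c u v = col ∧ (∀ a ∈ A, c u a = col) ∧ (∀ b ∈ B, c v b = col)

lemma hasMono_iff {V C : Type*} (c : V → V → C) (n m : ℕ) :
    HasMonoDoubleStar c n m ↔ ∃ col, MonoDSCol c n m col := by
  constructor
  · rintro ⟨u,v,A,B,col,h⟩; exact ⟨col,u,v,A,B,h⟩
  · rintro ⟨col,u,v,A,B,h⟩; exact ⟨u,v,A,B,col,h⟩

section Refute
variable {V C : Type*} [Fintype V] [DecidableEq V] {c : V → V → C} {n m : ℕ} {col : C}

lemma refuteA (hmn : m ≤ n) (S : Finset V) (hS : S.card ≤ m)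
    (hedge : ∀ x y : V, x ≠ y → c x y = col → (x ∈ S ∧ y ∉ S) ∨ (x ∉ S ∧ y ∈ S)) :
    ¬ MonoDSCol c n m col := by
  rintro ⟨u, v, A, B, huv, hA, hB, hdisj, huA, huB, hvA, hvB, hcuv, hAc, hBc⟩
  rcases hedge u v huv hcuv with ⟨hu, hv⟩ | ⟨hu, hv⟩
  · have hBS : ∀ b ∈ B, b ∈ S := by
      intro b hb
      rcases hedge v b (by rintro rfl; exact hvB hb) (hBc b hb) with ⟨h1, _⟩ | ⟨_, h2⟩
      · exact absurd h1 hv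
      · exact h2
    have hsub : insert u B ⊆ S := by
      intro x hx; rcases mem_insert.mp hx with rfl | hx
      · exact hu
      · exact hBS x hx
    have h1 := card_le_card hsub
    rw [card_insert_of_notMem huB, hB] at h1
    omega
  · have hAS : ∀ a ∈ A, a ∈ S := by
      intro a ha
      rcases hedge u a (by rintro rfl; exact huA ha) (hAc a ha) with ⟨h1, _⟩ | ⟨_, h2⟩
      · exact absurd h1 hu
      · exact h2
    have hsub : insert v A ⊆ S := by
      intro x hx; rcases mem_insert.mp hx with rfl | hx
      · exact hv
      · exact hAS x hx
    have h1 := card_le_card hsub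
    rw [card_insert_of_notMem hvA, hA] at h1
    omega

lemma refuteB {ι : Type*} [DecidableEq ι] (q : V → ι)
    (hedge : ∀ x y : V, x ≠ y → c x y = col → q x = q y)
    (hcard : ∀ x : V, (univ.filter (fun y => q y = q x)).card ≤ n + m + 1) :
    ¬ MonoDSCol c n m col := by
  rintro ⟨u, v, A, B, huv, hA, hB, hdisj, huA, huB, hvA, hvB, hcuv, hAc, hBc⟩
  set F := univ.filter (fun y => q y = q u) with hF
  have huF : u ∈ F := mem_filter.mpr ⟨mem_univ _, rfl⟩
  have hvF : v ∈ F := mem_filter.mpr ⟨mem_univ _, (hedge u v huv hcuv).symm⟩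
  have hAF : ∀ a ∈ A, a ∈ F := by
    intro a ha
    exact mem_filter.mpr ⟨mem_univ _,
      (hedge u a (by rintro rfl; exact huA ha) (hAc a ha)).symm⟩
  have hBF : ∀ b ∈ B, b ∈ F := by
    intro b hb
    exact mem_filter.mpr ⟨mem_univ _,
      ((hedge v b (by rintro rfl; exact hvB hb) (hBc b hb)).symm.trans
        (hedge u v huv hcuv).symm)⟩
  have hsub : insert u (insert v (A ∪ B)) ⊆ F := by
    intro x hx
    rcases mem_insert.mp hx with rfl | hx
    · exact huF
    rcases mem_insert.mp hx with rfl | hx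
    · exact hvF
    rcases mem_union.mp hx with hx | hx
    · exact hAF x hx
    · exact hBF x hx
  have hcAB : (A ∪ B).card = n + m := by
    rw [card_union_of_disjoint hdisj, hA, hB]
  have hv' : v ∉ A ∪ B := by simp [hvA, hvB]
  have hu' : u ∉ insert v (A ∪ B) := by simp [huv, huA, huB]
  have h1 := card_le_card hsub
  rw [card_insert_of_notMem hu', card_insert_of_notMem hv', hcAB] at h1
  have h2 := hcard u
  rw [← hF] at h2
  omega

lemma refuteC (T : V → Finset V) (hT : ∀ x, (T x).card ≤ n)
    (hedge : ∀ x y : V, x ≠ y → c x y = col → y ∈ T x) :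
    ¬ MonoDSCol c n m col := by
  rintro ⟨u, v, A, B, huv, hA, hB, hd, huA, huB, hvA, hvB, hcuv, hAc, hBc⟩
  have hsub : insert v A ⊆ T u := by
    intro x hx; rcases mem_insert.mp hx with h | hx
    · rw [h]; exact hedge u v huv hcuv
    · exact hedge u x (by rintro rfl; exact huA hx) (hAc x hx)
  have h1 := card_le_card hsub
  rw [card_insert_of_notMem hvA, hA] at h1
  have := hT u; omega

end Refute

lemma fib_card {R : ℕ} (szf : ℕ → ℕ) (b : ℕ) :
    ((univ : Finset (Σ i : Fin R, Fin (szf i.val))).filter (fun v => v.1.val = b)).card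
      ≤ szf b := by
  have h := card_le_card_of_injOn (s := (univ : Finset (Σ i : Fin R, Fin (szf i.val))).filter
      (fun v => v.1.val = b)) (t := Finset.range (szf b)) (fun v => v.2.val) ?_ ?_
  · simpa using h
  · intro v hv
    simp only [mem_coe, mem_filter] at hv
    have h2 : v.2.val < szf v.1.val := v.2.isLt
    have h3 : szf v.1.val = szf b := by rw [hv.2]
    simp only [mem_coe, mem_range]
    omega
  · rintro ⟨i, x⟩ hx ⟨j, y⟩ hy hxy
    simp only [coe_filter, Set.mem_setOf_eq, mem_univ, true_and] at hx hy
    have hij : i = j := Fin.ext (hx.trans hy.symm)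
    subst hij
    simp only at hxy
    have : x = y := Fin.val_injective hxy
    subst this; rfl

lemma noRainbow {V P C : Type*} (p : V → P) (f : P → P → C)
    (H : ∀ a b c : P, f a b = f a c ∨ f a b = f b c ∨ f a c = f b c) :
    ¬ HasRainbowTriangle (fun v w => f (p v) (p w)) := by
  rintro ⟨u, v, w, _, _, _, h1, h2, h3⟩
  rcases H (p u) (p v) (p w) with h | h | h
  · exact h1 h
  · exact h2 h
  · exact h3 h

lemma grAvoid_of {V : Type*} [Fintype V] {k n m N : ℕ}
    (c : V → V → Fin k) (hcard : Fintype.card V = N)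
    (hsym : IsSymmColoring c) (hrb : ¬ HasRainbowTriangle c)
    (hmono : ¬ HasMonoDoubleStar c n m) : grAvoid k n m N := by
  classical
  have e := Fintype.equivFinOfCardEq hcard
  refine ⟨fun x y => c (e.symm x) (e.symm y), fun u v => hsym _ _, ?_, ?_⟩
  · rintro ⟨u, v, w, h1, h2, h3, h4, h5, h6⟩
    exact hrb ⟨e.symm u, e.symm v, e.symm w, e.symm.injective.ne h1,
      e.symm.injective.ne h2, e.symm.injective.ne h3, h4, h5, h6⟩
  · rintro ⟨u, v, A, B, col, huv, hA, hB, hdisj, huA, huB, hvA, hvB, hcuv, hAc, hBc⟩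
    refine hmono ⟨e.symm u, e.symm v, A.map e.symm.toEmbedding, B.map e.symm.toEmbedding, col,
      e.symm.injective.ne huv, by simp [hA], by simp [hB],
      by rwa [Finset.disjoint_map], ?_, ?_, ?_, ?_, hcuv, ?_, ?_⟩
    · exact fun h => huA ((Finset.mem_map' _).mp h)
    · exact fun h => huB ((Finset.mem_map' _).mp h)
    · exact fun h => hvA ((Finset.mem_map' _).mp h)
    · exact fun h => hvB ((Finset.mem_map' _).mp h)
    · rintro a ha
      rw [Finset.mem_map] at ha
      obtain ⟨b, hb, rfl⟩ := ha
      exact hAc b hb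
    · rintro b hb
      rw [Finset.mem_map] at hb
      obtain ⟨b', hb', rfl⟩ := hb
      exact hBc b' hb'


/-! ### Construction II : parts V1 (size m), V2 (size m), V3 (size t), groups of size m -/

def fII (k : ℕ) (hk : 3 ≤ k) (i j : Fin k) : Fin k :=
  if i = j then ⟨0, by omega⟩
  else if 3 ≤ max i.val j.val then ⟨max i.val j.val, max_lt i.isLt j.isLt⟩
  else if min i.val j.val = 0 then ⟨1, by omega⟩ else ⟨2, by omega⟩

lemma fII_symm (k : ℕ) (hk : 3 ≤ k) (i j : Fin k) : fII k hk i j = fII k hk j i := by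
  unfold fII
  by_cases h : i = j
  · subst h; rfl
  · rw [if_neg h, if_neg (Ne.symm h)]
    apply Fin.ext
    simp only [apply_ite Fin.val, Fin.val_mk]
    split_ifs <;> omega

lemma fII_group (k : ℕ) (hk : 3 ≤ k) (i j : Fin k) (hij : i ≠ j)
    (h : 3 ≤ max i.val j.val) :
    fII k hk i j = ⟨max i.val j.val, max_lt i.isLt j.isLt⟩ := by
  unfold fII; rw [if_neg hij, if_pos h]

lemma fII_base1 (k : ℕ) (hk : 3 ≤ k) (i j : Fin k) (hij : i ≠ j)
    (h3 : max i.val j.val < 3) (h0 : min i.val j.val = 0) :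
    fII k hk i j = ⟨1, by omega⟩ := by
  unfold fII; rw [if_neg hij, if_neg (by omega), if_pos h0]

lemma fII_inv0 (k : ℕ) (hk : 3 ≤ k) (i j : Fin k)
    (h : (fII k hk i j).val = 0) : i.val = j.val := by
  rcases eq_or_ne i j with rfl | hne
  · rfl
  have hv : i.val ≠ j.val := fun hh => hne (Fin.ext hh)
  unfold fII at h
  rw [if_neg hne] at h
  split_ifs at h with h2 h3 <;> simp only [Fin.val_mk] at h <;> omega

lemma fII_inv1 (k : ℕ) (hk : 3 ≤ k) (i j : Fin k)
    (h : (fII k hk i j).val = 1) :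
    (i.val = 0 ∧ j.val ≠ 0) ∨ (i.val ≠ 0 ∧ j.val = 0) := by
  rcases eq_or_ne i j with rfl | hne
  · unfold fII at h; rw [if_pos rfl] at h; simp only [Fin.val_mk] at h; omega
  have hv : i.val ≠ j.val := fun hh => hne (Fin.ext hh)
  unfold fII at h
  rw [if_neg hne] at h
  split_ifs at h with h2 h3 <;> simp only [Fin.val_mk] at h <;> omega

lemma fII_inv2 (k : ℕ) (hk : 3 ≤ k) (i j : Fin k)
    (h : (fII k hk i j).val = 2) :
    (i.val = 1 ∧ j.val ≠ 1) ∨ (i.val ≠ 1 ∧ j.val = 1) := by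
  rcases eq_or_ne i j with rfl | hne
  · unfold fII at h; rw [if_pos rfl] at h; simp only [Fin.val_mk] at h; omega
  have hv : i.val ≠ j.val := fun hh => hne (Fin.ext hh)
  unfold fII at h
  rw [if_neg hne] at h
  split_ifs at h with h2 h3 <;> simp only [Fin.val_mk] at h <;> omega

lemma fII_invG (k : ℕ) (hk : 3 ≤ k) (i j : Fin k) (d : ℕ) (hd : 3 ≤ d)
    (h : (fII k hk i j).val = d) :
    (i.val = d ∧ j.val ≠ d) ∨ (i.val ≠ d ∧ j.val = d) := by
  rcases eq_or_ne i j with rfl | hne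
  · unfold fII at h; rw [if_pos rfl] at h; simp only [Fin.val_mk] at h; omega
  have hv : i.val ≠ j.val := fun hh => hne (Fin.ext hh)
  unfold fII at h
  rw [if_neg hne] at h
  split_ifs at h with h2 h3 <;> simp only [Fin.val_mk] at h <;> omega

lemma H_II (k : ℕ) (hk : 3 ≤ k) (a b c : Fin k) :
    fII k hk a b = fII k hk a c ∨ fII k hk a b = fII k hk b c ∨
      fII k hk a c = fII k hk b c := by
  by_cases hab : a = b
  · subst hab; right; right; rfl
  by_cases hac : a = c
  · subst hac; right; left; exact fII_symm k hk a b
  by_cases hbc : b = c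
  · subst hbc; left; rfl
  by_cases h3 : a.val < 3 ∧ b.val < 3 ∧ c.val < 3
  · obtain ⟨ha3, hb3, hc3⟩ := h3
    have hab' : a.val ≠ b.val := fun hh => hab (Fin.ext hh)
    have hac' : a.val ≠ c.val := fun hh => hac (Fin.ext hh)
    have hbc' : b.val ≠ c.val := fun hh => hbc (Fin.ext hh)
    rcases (show a.val = 0 ∨ b.val = 0 ∨ c.val = 0 by omega) with h0 | h0 | h0
    · left
      rw [fII_base1 k hk a b hab (by omega) (by omega),
        fII_base1 k hk a c hac (by omega) (by omega)]
    · right; left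
      rw [fII_base1 k hk a b hab (by omega) (by omega),
        fII_base1 k hk b c hbc (by omega) (by omega)]
    · right; right
      rw [fII_base1 k hk a c hac (by omega) (by omega),
        fII_base1 k hk b c hbc (by omega) (by omega)]
  · rcases (show (3 ≤ a.val ∧ b.val ≤ a.val ∧ c.val ≤ a.val) ∨
        (3 ≤ b.val ∧ a.val ≤ b.val ∧ c.val ≤ b.val) ∨
        (3 ≤ c.val ∧ a.val ≤ c.val ∧ b.val ≤ c.val) by omega) with
      ⟨h1, h2, h3⟩ | ⟨h1, h2, h3⟩ | ⟨h1, h2, h3⟩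
    · left
      rw [fII_group k hk a b hab (by omega), fII_group k hk a c hac (by omega)]
      simp only [Fin.mk.injEq]; omega
    · right; left
      rw [fII_group k hk a b hab (by omega), fII_group k hk b c hbc (by omega)]
      simp only [Fin.mk.injEq]; omega
    · right; right
      rw [fII_group k hk a c hac (by omega), fII_group k hk b c hbc (by omega)]
      simp only [Fin.mk.injEq]; omega

def szNII (t m : ℕ) : ℕ → ℕ := fun b => if b = 2 then t else m

abbrev VII (k t m : ℕ) := Σ i : Fin k, Fin (szNII t m i.val)

def cII (k t m : ℕ) (hk : 3 ≤ k) : VII k t m → VII k t m → Fin k :=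
  fun v w => fII k hk v.1 w.1

lemma monoII (k t n m : ℕ) (hk : 3 ≤ k) (hm : 1 ≤ m) (hmn : m ≤ n)
    (ht : t ≤ n + m + 1) : ¬ HasMonoDoubleStar (cII k t m hk) n m := by
  rw [hasMono_iff]
  rintro ⟨col, hcol⟩
  have hck := col.isLt
  rcases (show col.val = 0 ∨ col.val = 1 ∨ col.val = 2 ∨ 3 ≤ col.val by omega)
    with h | h | h | h
  · refine refuteB (fun v => v.1.val) ?_ ?_ hcol
    · intro x y hxy hc
      have hv : (fII k hk x.1 y.1).val = 0 := by
        show (cII k t m hk x y).val = 0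
        rw [hc, h]
      exact fII_inv0 k hk x.1 y.1 hv
    · intro x
      have h2 := fib_card (R := k) (szNII t m) (x.1.val)
      have h3 : szNII t m x.1.val ≤ n + m + 1 := by
        unfold szNII; split <;> omega
      refine le_trans (le_trans (card_le_card ?_) h2) h3
      intro z hz
      simp only [mem_filter] at hz ⊢
      exact hz
  · refine refuteA hmn (univ.filter (fun v : VII k t m => v.1.val = 0)) ?_ ?_ hcol
    · have h2 := fib_card (R := k) (szNII t m) 0
      have h3 : szNII t m 0 = m := by unfold szNII; simp
      refine le_trans (le_trans (card_le_card ?_) h2) (le_of_eq h3)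
      intro z hz
      simp only [mem_filter] at hz ⊢
      exact hz
    · intro x y hxy hc
      have hv : (fII k hk x.1 y.1).val = 1 := by
        show (cII k t m hk x y).val = 1
        rw [hc, h]
      rcases fII_inv1 k hk x.1 y.1 hv with ⟨h1, h2⟩ | ⟨h1, h2⟩
      · left; constructor <;> simp [h1, h2]
      · right; constructor <;> simp [h1, h2]
  · refine refuteA hmn (univ.filter (fun v : VII k t m => v.1.val = 1)) ?_ ?_ hcol
    · have h2 := fib_card (R := k) (szNII t m) 1
      have h3 : szNII t m 1 = m := by unfold szNII; simp
      refine le_trans (le_trans (card_le_card ?_) h2) (le_of_eq h3)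
      intro z hz
      simp only [mem_filter] at hz ⊢
      exact hz
    · intro x y hxy hc
      have hv : (fII k hk x.1 y.1).val = 2 := by
        show (cII k t m hk x y).val = 2
        rw [hc, h]
      rcases fII_inv2 k hk x.1 y.1 hv with ⟨h1, h2⟩ | ⟨h1, h2⟩
      · left; constructor <;> simp [h1, h2]
      · right; constructor <;> simp [h1, h2]
  · refine refuteA hmn (univ.filter (fun v : VII k t m => v.1.val = col.val)) ?_ ?_ hcol
    · have h2 := fib_card (R := k) (szNII t m) col.val
      have h3 : szNII t m col.val = m := by
        unfold szNII; rw [if_neg (by omega)]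
      refine le_trans (le_trans (card_le_card ?_) h2) (le_of_eq h3)
      intro z hz
      simp only [mem_filter] at hz ⊢
      exact hz
    · intro x y hxy hc
      have hv : (fII k hk x.1 y.1).val = col.val := by
        show (cII k t m hk x y).val = col.val
        rw [hc]
      rcases fII_invG k hk x.1 y.1 col.val h hv with ⟨h1, h2⟩ | ⟨h1, h2⟩
      · left; constructor <;> simp [h1, h2]
      · right; constructor <;> simp [h1, h2]


lemma cardII (k t m : ℕ) (hk : 3 ≤ k) :
    Fintype.card (VII k t m) = t + 2 * m + m * (k - 3) := by
  rw [show Fintype.card (VII k t m) = ∑ i : Fin k, szNII t m i.val by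
    simp [VII, Fintype.card_sigma]]
  rw [Fin.sum_univ_eq_sum_range (fun j => szNII t m j) k]
  rw [Finset.range_eq_Ico, ← Finset.sum_Ico_consecutive (fun j => szNII t m j)
    (by omega : 0 ≤ 3) (by omega : 3 ≤ k)]
  have h1 : ∑ j ∈ Finset.Ico 0 3, szNII t m j = 2 * m + t := by
    rw [← Finset.range_eq_Ico]
    simp [Finset.sum_range_succ, szNII]
    ring
  have h2 : ∑ j ∈ Finset.Ico 3 k, szNII t m j = (k - 3) * m := by
    rw [Finset.sum_congr rfl (fun j hj => show szNII t m j = m by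
      unfold szNII
      rw [if_neg (by have := (Finset.mem_Ico.mp hj).1; omega)])]
    rw [Finset.sum_const, Nat.card_Ico, smul_eq_mul]
  rw [h1, h2]
  ring

lemma consII (n m k t : ℕ) (hm : 1 ≤ m) (hmn : m ≤ n) (hk : 3 ≤ k)
    (ht : t ≤ n + m + 1) : grAvoid k n m (t + 2 * m + m * (k - 3)) := by
  refine grAvoid_of (cII k t m hk) (cardII k t m hk) ?_ ?_ ?_
  · intro u v; exact fII_symm k hk u.1 v.1
  · exact noRainbow (fun v : VII k t m => v.1) (fII k hk) (H_II k hk)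
  · exact monoII k t n m hk hm hmn ht

/-! ### Construction I : blown-up 2-colored C5 plus groups -/

def fI (k : ℕ) (hk : 3 ≤ k) (i j : Fin (k + 2)) : Fin k :=
  if i = j then ⟨2, by omega⟩
  else if 5 ≤ max i.val j.val then
    ⟨max i.val j.val - 2, by have h1 := i.isLt; have h2 := j.isLt; omega⟩
  else if max i.val j.val - min i.val j.val = 1 ∨ max i.val j.val - min i.val j.val = 4
    then ⟨0, by omega⟩ else ⟨1, by omega⟩

lemma fI_symm (k : ℕ) (hk : 3 ≤ k) (i j : Fin (k + 2)) : fI k hk i j = fI k hk j i := by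
  unfold fI
  by_cases h : i = j
  · subst h; rfl
  · rw [if_neg h, if_neg (Ne.symm h)]
    apply Fin.ext
    simp only [apply_ite Fin.val, Fin.val_mk]
    split_ifs <;> omega

lemma fI_group (k : ℕ) (hk : 3 ≤ k) (i j : Fin (k + 2)) (hij : i ≠ j)
    (hg : 5 ≤ max i.val j.val) :
    fI k hk i j = ⟨max i.val j.val - 2, by have h1 := i.isLt; have h2 := j.isLt; omega⟩ := by
  unfold fI; rw [if_neg hij, if_pos hg]

lemma fI_base (k : ℕ) (hk : 3 ≤ k) (i j : Fin (k + 2)) (hij : i ≠ j)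
    (hb : max i.val j.val < 5) :
    (fI k hk i j).val = 0 ∨ (fI k hk i j).val = 1 := by
  unfold fI
  rw [if_neg hij, if_neg (show ¬ 5 ≤ max i.val j.val by omega)]
  split_ifs with hx
  · left; rfl
  · right; rfl

lemma fI_inv0 (k : ℕ) (hk : 3 ≤ k) (i j : Fin (k + 2))
    (hv : (fI k hk i j).val = 0) :
    i.val < 5 ∧ j.val < 5 ∧ i.val ≠ j.val ∧
      (max i.val j.val - min i.val j.val = 1 ∨ max i.val j.val - min i.val j.val = 4) := by
  rcases eq_or_ne i j with rfl | hne
  · unfold fI at hv; rw [if_pos rfl] at hv; simp only [Fin.val_mk] at hv; omega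
  have hd : i.val ≠ j.val := fun hh => hne (Fin.ext hh)
  unfold fI at hv
  rw [if_neg hne] at hv
  split_ifs at hv with h2 h3 <;> simp only [Fin.val_mk] at hv <;> omega

lemma fI_inv1 (k : ℕ) (hk : 3 ≤ k) (i j : Fin (k + 2))
    (hv : (fI k hk i j).val = 1) :
    i.val < 5 ∧ j.val < 5 ∧ i.val ≠ j.val ∧
      ¬(max i.val j.val - min i.val j.val = 1 ∨ max i.val j.val - min i.val j.val = 4) := by
  rcases eq_or_ne i j with rfl | hne
  · unfold fI at hv; rw [if_pos rfl] at hv; simp only [Fin.val_mk] at hv; omega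
  have hd : i.val ≠ j.val := fun hh => hne (Fin.ext hh)
  unfold fI at hv
  rw [if_neg hne] at hv
  split_ifs at hv with h2 h3 <;> simp only [Fin.val_mk] at hv <;> omega

lemma fI_inv2 (k : ℕ) (hk : 3 ≤ k) (i j : Fin (k + 2))
    (hv : (fI k hk i j).val = 2) : i.val = j.val := by
  rcases eq_or_ne i j with rfl | hne
  · rfl
  have hd : i.val ≠ j.val := fun hh => hne (Fin.ext hh)
  unfold fI at hv
  rw [if_neg hne] at hv
  split_ifs at hv with h2 h3 <;> simp only [Fin.val_mk] at hv <;> omega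

lemma fI_invG (k : ℕ) (hk : 3 ≤ k) (i j : Fin (k + 2)) (d : ℕ) (hd3 : 3 ≤ d)
    (hv : (fI k hk i j).val = d) :
    (i.val = d + 2 ∧ j.val ≠ d + 2) ∨ (i.val ≠ d + 2 ∧ j.val = d + 2) := by
  rcases eq_or_ne i j with rfl | hne
  · unfold fI at hv; rw [if_pos rfl] at hv; simp only [Fin.val_mk] at hv; omega
  have hd : i.val ≠ j.val := fun hh => hne (Fin.ext hh)
  unfold fI at hv
  rw [if_neg hne] at hv
  split_ifs at hv with h2 h3 <;> simp only [Fin.val_mk] at hv <;> omega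

lemma H_I (k : ℕ) (hk : 3 ≤ k) (a b c : Fin (k + 2)) :
    fI k hk a b = fI k hk a c ∨ fI k hk a b = fI k hk b c ∨
      fI k hk a c = fI k hk b c := by
  by_cases hab : a = b
  · subst hab; right; right; rfl
  by_cases hac : a = c
  · subst hac; right; left; exact fI_symm k hk a b
  by_cases hbc : b = c
  · subst hbc; left; rfl
  by_cases h5 : a.val < 5 ∧ b.val < 5 ∧ c.val < 5
  · obtain ⟨ha5, hb5, hc5⟩ := h5
    have h1 := fI_base k hk a b hab (by omega)
    have h2 := fI_base k hk a c hac (by omega)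
    have h3 := fI_base k hk b c hbc (by omega)
    simp only [Fin.ext_iff]
    omega
  · rcases (show (5 ≤ a.val ∧ b.val ≤ a.val ∧ c.val ≤ a.val) ∨
        (5 ≤ b.val ∧ a.val ≤ b.val ∧ c.val ≤ b.val) ∨
        (5 ≤ c.val ∧ a.val ≤ c.val ∧ b.val ≤ c.val) by omega) with
      ⟨h1, h2, h3⟩ | ⟨h1, h2, h3⟩ | ⟨h1, h2, h3⟩
    · left
      rw [fI_group k hk a b hab (by omega), fI_group k hk a c hac (by omega)]
      simp only [Fin.mk.injEq]; omega
    · right; left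
      rw [fI_group k hk a b hab (by omega), fI_group k hk b c hbc (by omega)]
      simp only [Fin.mk.injEq]; omega
    · right; right
      rw [fI_group k hk a c hac (by omega), fI_group k hk b c hbc (by omega)]
      simp only [Fin.mk.injEq]; omega

def szNI (h e m : ℕ) : ℕ → ℕ := fun b => if b < 5 then (if b = 0 then h + e else h) else m

abbrev VI (k h e m : ℕ) := Σ i : Fin (k + 2), Fin (szNI h e m i.val)

def cI (k h e m : ℕ) (hk : 3 ≤ k) : VI k h e m → VI k h e m → Fin k :=
  fun v w => fI k hk v.1 w.1

lemma monoI (k h e n m : ℕ) (hk : 3 ≤ k) (hm : 1 ≤ m) (hmn : m ≤ n)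
    (he : e ≤ 1) (hsz : 2 * h + e ≤ n) : ¬ HasMonoDoubleStar (cI k h e m hk) n m := by
  rw [hasMono_iff]
  rintro ⟨col, hcol⟩
  have hck := col.isLt
  rcases (show col.val = 0 ∨ col.val = 1 ∨ col.val = 2 ∨ 3 ≤ col.val by omega)
    with hc0 | hc0 | hc0 | hc0
  · refine refuteC (fun x => univ.filter (fun y : VI k h e m =>
        y.1.val = (x.1.val + 1) % 5 ∨ y.1.val = (x.1.val + 4) % 5)) ?_ ?_ hcol
    · intro x
      refine le_trans (le_trans (card_le_card (fun z hz => ?_))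
        (card_union_le (univ.filter (fun y : VI k h e m => y.1.val = (x.1.val + 1) % 5))
          (univ.filter (fun y : VI k h e m => y.1.val = (x.1.val + 4) % 5)))) ?_
      · simp only [mem_filter, mem_union] at hz ⊢
        rcases hz.2 with h' | h'
        · exact Or.inl ⟨hz.1, h'⟩
        · exact Or.inr ⟨hz.1, h'⟩
      · have e1 : (univ.filter (fun y : VI k h e m => y.1.val = (x.1.val + 1) % 5)).card
            ≤ szNI h e m ((x.1.val + 1) % 5) := by
          refine le_trans (card_le_card (fun z hz => ?_)) (fib_card (R := k + 2) (szNI h e m) _)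
          simp only [mem_filter] at hz ⊢; exact hz
        have e2 : (univ.filter (fun y : VI k h e m => y.1.val = (x.1.val + 4) % 5)).card
            ≤ szNI h e m ((x.1.val + 4) % 5) := by
          refine le_trans (card_le_card (fun z hz => ?_)) (fib_card (R := k + 2) (szNI h e m) _)
          simp only [mem_filter] at hz ⊢; exact hz
        have g3 : szNI h e m ((x.1.val + 1) % 5) + szNI h e m ((x.1.val + 4) % 5) ≤ n := by
          unfold szNI
          have hb : ¬((x.1.val + 1) % 5 = 0 ∧ (x.1.val + 4) % 5 = 0) := by omega
          split_ifs <;> omega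
        omega
    · intro x y hxy hc
      have hv : (fI k hk x.1 y.1).val = 0 := by
        show (cI k h e m hk x y).val = 0
        rw [hc, hc0]
      obtain ⟨q1, q2, q3, q4⟩ := fI_inv0 k hk x.1 y.1 hv
      simp only [mem_filter]
      exact ⟨mem_univ _, by omega⟩
  · refine refuteC (fun x => univ.filter (fun y : VI k h e m =>
        y.1.val = (x.1.val + 2) % 5 ∨ y.1.val = (x.1.val + 3) % 5)) ?_ ?_ hcol
    · intro x
      refine le_trans (le_trans (card_le_card (fun z hz => ?_))
        (card_union_le (univ.filter (fun y : VI k h e m => y.1.val = (x.1.val + 2) % 5))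
          (univ.filter (fun y : VI k h e m => y.1.val = (x.1.val + 3) % 5)))) ?_
      · simp only [mem_filter, mem_union] at hz ⊢
        rcases hz.2 with h' | h'
        · exact Or.inl ⟨hz.1, h'⟩
        · exact Or.inr ⟨hz.1, h'⟩
      · have e1 : (univ.filter (fun y : VI k h e m => y.1.val = (x.1.val + 2) % 5)).card
            ≤ szNI h e m ((x.1.val + 2) % 5) := by
          refine le_trans (card_le_card (fun z hz => ?_)) (fib_card (R := k + 2) (szNI h e m) _)
          simp only [mem_filter] at hz ⊢; exact hz
        have e2 : (univ.filter (fun y : VI k h e m => y.1.val = (x.1.val + 3) % 5)).card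
            ≤ szNI h e m ((x.1.val + 3) % 5) := by
          refine le_trans (card_le_card (fun z hz => ?_)) (fib_card (R := k + 2) (szNI h e m) _)
          simp only [mem_filter] at hz ⊢; exact hz
        have g3 : szNI h e m ((x.1.val + 2) % 5) + szNI h e m ((x.1.val + 3) % 5) ≤ n := by
          unfold szNI
          have hb : ¬((x.1.val + 2) % 5 = 0 ∧ (x.1.val + 3) % 5 = 0) := by omega
          split_ifs <;> omega
        omega
    · intro x y hxy hc
      have hv : (fI k hk x.1 y.1).val = 1 := by
        show (cI k h e m hk x y).val = 1
        rw [hc, hc0]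
      obtain ⟨q1, q2, q3, q4⟩ := fI_inv1 k hk x.1 y.1 hv
      simp only [mem_filter]
      exact ⟨mem_univ _, by omega⟩
  · refine refuteB (fun v => v.1.val) ?_ ?_ hcol
    · intro x y hxy hc
      have hv : (fI k hk x.1 y.1).val = 2 := by
        show (cI k h e m hk x y).val = 2
        rw [hc, hc0]
      exact fI_inv2 k hk x.1 y.1 hv
    · intro x
      have g1 := fib_card (R := k + 2) (szNI h e m) (x.1.val)
      have g2 : szNI h e m x.1.val ≤ n + m + 1 := by
        unfold szNI; split_ifs <;> omega
      refine le_trans (le_trans (card_le_card ?_) g1) g2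
      intro z hz
      simp only [mem_filter] at hz ⊢
      exact hz
  · refine refuteA hmn (univ.filter (fun v : VI k h e m => v.1.val = col.val + 2)) ?_ ?_ hcol
    · have g1 := fib_card (R := k + 2) (szNI h e m) (col.val + 2)
      have g2 : szNI h e m (col.val + 2) = m := by
        unfold szNI; rw [if_neg (by omega)]
      refine le_trans (le_trans (card_le_card ?_) g1) (le_of_eq g2)
      intro z hz
      simp only [mem_filter] at hz ⊢
      exact hz
    · intro x y hxy hc
      have hv : (fI k hk x.1 y.1).val = col.val := by
        show (cI k h e m hk x y).val = col.val
        rw [hc]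
      rcases fI_invG k hk x.1 y.1 col.val hc0 hv with ⟨h1, h2⟩ | ⟨h1, h2⟩
      · left; constructor <;> simp [h1, h2]
      · right; constructor <;> simp [h1, h2]

lemma cardI (k h e m : ℕ) (hk : 3 ≤ k) :
    Fintype.card (VI k h e m) = 5 * h + e + m * (k - 3) := by
  rw [show Fintype.card (VI k h e m) = ∑ i : Fin (k + 2), szNI h e m i.val by
    simp [VI, Fintype.card_sigma]]
  rw [Fin.sum_univ_eq_sum_range (fun j => szNI h e m j) (k + 2)]
  rw [Finset.range_eq_Ico, ← Finset.sum_Ico_consecutive (fun j => szNI h e m j)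
    (by omega : 0 ≤ 5) (by omega : 5 ≤ k + 2)]
  have h1 : ∑ j ∈ Finset.Ico 0 5, szNI h e m j = 5 * h + e := by
    rw [← Finset.range_eq_Ico]
    simp [Finset.sum_range_succ, szNI]
    omega
  have h2 : ∑ j ∈ Finset.Ico 5 (k + 2), szNI h e m j = (k - 3) * m := by
    rw [Finset.sum_congr rfl (fun j hj => show szNI h e m j = m by
      unfold szNI
      rw [if_neg (by have := (Finset.mem_Ico.mp hj).1; omega)])]
    rw [Finset.sum_const, Nat.card_Ico, smul_eq_mul]
    have hke : k + 2 - 5 = k - 3 := by omega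
    rw [hke]
  rw [h1, h2]
  ring

lemma consI (n m k h e : ℕ) (hm : 1 ≤ m) (hmn : m ≤ n) (hk : 3 ≤ k)
    (he : e ≤ 1) (hsz : 2 * h + e ≤ n) : grAvoid k n m (5 * h + e + m * (k - 3)) := by
  refine grAvoid_of (cI k h e m hk) (cardI k h e m hk) ?_ ?_ ?_
  · intro u v; exact fI_symm k hk u.1 v.1
  · exact noRainbow (fun v : VI k h e m => v.1) (fI k hk) (H_I k hk)
  · exact monoI k h e n m hk hm hmn he hsz

end Stmt12


/-- For n ≥ m ≥ 1 and k ≥ 3, `gr_k(K_3 : S(n,m)) ≥ max{5(n/2), n+2m+1} + m(k-3) + 1`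
for even `n` and `≥ max{5((n-1)/2), n+2m+1} + m(k-3) + 2` for odd `n`:
the complete graph on one fewer vertex admits an avoiding coloring. -/
theorem stmt_12 (n m k : ℕ) (hm : 1 ≤ m) (hmn : m ≤ n) (hk : 3 ≤ k) :
    grAvoid k n m
      ((if Even n then max (5 * (n / 2)) (n + 2 * m + 1) + m * (k - 3) + 1
        else max (5 * ((n - 1) / 2)) (n + 2 * m + 1) + m * (k - 3) + 2) - 1) := by
  have hn1 : 1 ≤ n := le_trans hm hmn
  by_cases hpar : Even n
  · rw [if_pos hpar]
    rcases le_or_gt (5 * (n / 2)) (n + 2 * m + 1) with hle | hlt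
    · have heq : max (5 * (n / 2)) (n + 2 * m + 1) + m * (k - 3) + 1 - 1
          = (n + 1) + 2 * m + m * (k - 3) := by
        rw [max_eq_right hle]; omega
      rw [heq]
      exact Stmt12.consII n m k (n + 1) hm hmn hk (by omega)
    · have heq : max (5 * (n / 2)) (n + 2 * m + 1) + m * (k - 3) + 1 - 1
          = 5 * (n / 2) + 0 + m * (k - 3) := by
        rw [max_eq_left (le_of_lt hlt)]; omega
      rw [heq]
      exact Stmt12.consI n m k (n / 2) 0 hm hmn hk (by omega) (by omega)
  · rw [if_neg hpar]
    have hodd : n % 2 = 1 := by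
      rcases Nat.even_or_odd n with hh | hh
      · exact absurd hh hpar
      · exact Nat.odd_iff.mp hh
    rcases le_or_gt (5 * ((n - 1) / 2)) (n + 2 * m + 1) with hle | hlt
    · have heq : max (5 * ((n - 1) / 2)) (n + 2 * m + 1) + m * (k - 3) + 2 - 1
          = (n + 2) + 2 * m + m * (k - 3) := by
        rw [max_eq_right hle]; omega
      rw [heq]
      exact Stmt12.consII n m k (n + 2) hm hmn hk (by omega)
    · have heq : max (5 * ((n - 1) / 2)) (n + 2 * m + 1) + m * (k - 3) + 2 - 1
          = 5 * ((n - 1) / 2) + 1 + m * (k - 3) := by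
        rw [max_eq_left (le_of_lt hlt)]; omega
      rw [heq]
      exact Stmt12.consI n m k ((n - 1) / 2) 1 hm hmn hk (by omega) (by omega)
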